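/- arXiv:0905.3665 — 3 statements merged into one kernel-verified Lean document; each statement's English description precedes it below -/
import Mathlib

section
/- For any fixed a ∈ C, the assignment σ_i ↦ a·g_i, τ_i ↦ p_i extends to a monoid homomorphism δ_a from the singular braid monoid SB_n to the multiplicative monoid of the Yokonuma–Hecke algebra Y_{d,n}(u). -/
open Finset

/-- The element `e_i = (1/d) * sum_{m=0}^{d-1} t_i^m t_{i+1}^{-m}` of the
Yokonuma--Hecke algebra; since `t_j^d = 1` we write `t_{i+1}^{-m} = t_{i+1}^{d-m}`. -/
noncomputable def eElt {A : Type*} [Ring A] [Algebra ℂ A] (d : ℕ) (t : ℕ → A) (i : ℕ) : A :=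
  (d : ℂ)⁻¹ • ∑ m ∈ Finset.range d, t i ^ m * t (i + 1) ^ (d - m)

/-- The element `p_i := e_i (1 - g_i)`. -/
noncomputable def pElt {A : Type*} [Ring A] [Algebra ℂ A] (d : ℕ) (t g : ℕ → A) (i : ℕ) : A :=
  eElt d t i * (1 - g i)

/-- Generators of the singular braid monoid: `sig i = σ_i`, `sigInv i = σ_i⁻¹`,
`tau i = τ_i`. -/
inductive SBGen : Type
  | sig : ℕ → SBGen
  | sigInv : ℕ → SBGen
  | tau : ℕ → SBGen

open SBGen in
/-- Defining relations of the singular braid monoid `SB_n`. -/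
inductive sbRel (n : ℕ) : FreeMonoid SBGen → FreeMonoid SBGen → Prop
  | invR (i : ℕ) (h1 : 1 ≤ i) (h2 : i ≤ n - 1) :
      sbRel n (FreeMonoid.of (sig i) * FreeMonoid.of (sigInv i)) 1
  | invL (i : ℕ) (h1 : 1 ≤ i) (h2 : i ≤ n - 1) :
      sbRel n (FreeMonoid.of (sigInv i) * FreeMonoid.of (sig i)) 1
  | commSS (i j : ℕ) (h1 : 1 ≤ i) (h2 : i ≤ n - 1) (h3 : 1 ≤ j) (h4 : j ≤ n - 1)
      (hfar : i + 1 < j ∨ j + 1 < i) :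
      sbRel n (FreeMonoid.of (sig i) * FreeMonoid.of (sig j))
        (FreeMonoid.of (sig j) * FreeMonoid.of (sig i))
  | commST (i j : ℕ) (h1 : 1 ≤ i) (h2 : i ≤ n - 1) (h3 : 1 ≤ j) (h4 : j ≤ n - 1)
      (hfar : i + 1 < j ∨ j + 1 < i) :
      sbRel n (FreeMonoid.of (sig i) * FreeMonoid.of (tau j))
        (FreeMonoid.of (tau j) * FreeMonoid.of (sig i))
  | commTT (i j : ℕ) (h1 : 1 ≤ i) (h2 : i ≤ n - 1) (h3 : 1 ≤ j) (h4 : j ≤ n - 1)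
      (hfar : i + 1 < j ∨ j + 1 < i) :
      sbRel n (FreeMonoid.of (tau i) * FreeMonoid.of (tau j))
        (FreeMonoid.of (tau j) * FreeMonoid.of (tau i))
  | commSTi (i : ℕ) (h1 : 1 ≤ i) (h2 : i ≤ n - 1) :
      sbRel n (FreeMonoid.of (sig i) * FreeMonoid.of (tau i))
        (FreeMonoid.of (tau i) * FreeMonoid.of (sig i))
  | braid (i j : ℕ) (h1 : 1 ≤ i) (h2 : i ≤ n - 1) (h3 : 1 ≤ j) (h4 : j ≤ n - 1)
      (hadj : j = i + 1 ∨ i = j + 1) :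
      sbRel n (FreeMonoid.of (sig i) * FreeMonoid.of (sig j) * FreeMonoid.of (sig i))
        (FreeMonoid.of (sig j) * FreeMonoid.of (sig i) * FreeMonoid.of (sig j))
  | braidT (i j : ℕ) (h1 : 1 ≤ i) (h2 : i ≤ n - 1) (h3 : 1 ≤ j) (h4 : j ≤ n - 1)
      (hadj : j = i + 1 ∨ i = j + 1) :
      sbRel n (FreeMonoid.of (sig i) * FreeMonoid.of (sig j) * FreeMonoid.of (tau i))
        (FreeMonoid.of (tau j) * FreeMonoid.of (sig i) * FreeMonoid.of (sig j))

/-- The singular braid monoid `SB_n` as a presented monoid. -/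
def SBMonoid (n : ℕ) := (conGen (sbRel n)).Quotient

noncomputable instance (n : ℕ) : Monoid (SBMonoid n) :=
  inferInstanceAs (Monoid (conGen (sbRel n)).Quotient)


section YHHelpers

variable {A : Type*} [Ring A]

lemma yh_monomial_pow (x y : A) (d : ℕ) (hc : x * y = y * x) (hy : y ^ d = 1) :
    ∀ k, k ≤ d → x ^ k * y ^ (d - k) = (x * y ^ (d - 1)) ^ k := by
  have hcp : ∀ m : ℕ, y ^ m * x = x * y ^ m := fun m =>
    ((Commute.pow_left (by exact hc.symm) m)).eq
  intro k hk
  induction k with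
  | zero => simpa using hy
  | succ k ih =>
    have hk' : k ≤ d := Nat.le_of_succ_le hk
    have h2 : d - k + (d - 1) = (d - (k + 1)) + d := by omega
    conv_rhs => rw [pow_succ, ← ih hk', mul_assoc (x ^ k), ← mul_assoc (y ^ (d - k)) x, hcp,
      mul_assoc x (y ^ (d - k)), ← pow_add, h2, pow_add, hy, mul_one, ← mul_assoc, ← pow_succ]

lemma yh_w_pow_d (x y : A) (d : ℕ) (hc : x * y = y * x) (hx : x ^ d = 1) (hy : y ^ d = 1) :
    (x * y ^ (d - 1)) ^ d = 1 := by
  have := (yh_monomial_pow x y d hc hy d le_rfl).symm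
  simpa [hx] using this

lemma yh_geom_shift (w : A) (d : ℕ) (hw : w ^ d = 1) :
    (∑ k ∈ range d, w ^ k) * w = ∑ k ∈ range d, w ^ k := by
  rw [Finset.sum_mul]
  simp only [← pow_succ]
  have h := Finset.sum_range_succ' (fun k => w ^ k) d
  rw [Finset.sum_range_succ] at h
  simp only [pow_zero] at h
  have := h.symm
  rw [hw] at this
  exact add_right_cancel this

lemma yh_geom_shift_pow (w : A) (d : ℕ) (hw : w ^ d = 1) (k : ℕ) :
    (∑ m ∈ range d, w ^ m) * w ^ k = ∑ m ∈ range d, w ^ m := by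
  induction k with
  | zero => simp
  | succ k ih => rw [pow_succ, ← mul_assoc, ih, yh_geom_shift w d hw]

lemma yh_S_sq (x y : A) (d : ℕ) (hc : x * y = y * x) (hx : x ^ d = 1) (hy : y ^ d = 1) :
    (∑ m ∈ range d, x ^ m * y ^ (d - m)) * (∑ m ∈ range d, x ^ m * y ^ (d - m))
      = d • ∑ m ∈ range d, x ^ m * y ^ (d - m) := by
  have hS : ∑ m ∈ range d, x ^ m * y ^ (d - m) = ∑ m ∈ range d, (x * y ^ (d-1)) ^ m := by
    refine Finset.sum_congr rfl fun m hm => ?_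
    exact yh_monomial_pow x y d hc hy m (le_of_lt (Finset.mem_range.mp hm))
  rw [hS, Finset.mul_sum]
  rw [Finset.sum_congr rfl (fun m _ => yh_geom_shift_pow _ d (yh_w_pow_d x y d hc hx hy) m)]
  rw [Finset.sum_const, Finset.card_range]

lemma yh_S_symm (x y : A) (d : ℕ) (hc : x * y = y * x) (hx : x ^ d = 1) (hy : y ^ d = 1) :
    ∑ m ∈ range d, y ^ m * x ^ (d - m) = ∑ m ∈ range d, x ^ m * y ^ (d - m) := by
  rcases Nat.eq_zero_or_pos d with h0 | hd
  · simp [h0]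
  set w := x * y ^ (d - 1) with hwdef
  set w' := y * x ^ (d - 1) with hw'def
  have hwd : w ^ d = 1 := yh_w_pow_d x y d hc hx hy
  have hw'w : w' * w = 1 := by
    rw [hwdef, hw'def, mul_assoc, ← mul_assoc (x ^ (d-1)), ← pow_succ,
      Nat.sub_add_cancel hd, hx, one_mul, ← pow_succ', Nat.sub_add_cancel hd, hy]
  have hw'k : ∀ k, k ≤ d → w' ^ k = w ^ (d - k) := by
    intro k hk
    have hinv : ∀ m : ℕ, w' ^ m * w ^ m = 1 := by
      intro m
      induction m with
      | zero => simp
      | succ m ih =>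
        rw [pow_succ, pow_succ', ← mul_assoc, mul_assoc (w' ^ m), hw'w, mul_one, ih]
    calc w' ^ k = w' ^ k * (w ^ k * w ^ (d - k)) := by
            rw [← pow_add, Nat.add_sub_cancel' hk, hwd, mul_one]
      _ = (w' ^ k * w ^ k) * w ^ (d - k) := by rw [mul_assoc]
      _ = w ^ (d - k) := by rw [hinv k, one_mul]
  have hL : ∑ m ∈ range d, y ^ m * x ^ (d - m) = ∑ m ∈ range d, w' ^ m := by
    refine Finset.sum_congr rfl fun m hm => ?_
    exact yh_monomial_pow y x d hc.symm hx m (le_of_lt (Finset.mem_range.mp hm))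
  have hR : ∑ m ∈ range d, x ^ m * y ^ (d - m) = ∑ m ∈ range d, w ^ m := by
    refine Finset.sum_congr rfl fun m hm => ?_
    exact yh_monomial_pow x y d hc hy m (le_of_lt (Finset.mem_range.mp hm))
  rw [hL, hR]
  calc ∑ m ∈ range d, w' ^ m = ∑ m ∈ range d, w ^ (d - m) := by
        refine Finset.sum_congr rfl fun m hm => ?_
        exact hw'k m (le_of_lt (Finset.mem_range.mp hm))
    _ = ∑ m ∈ range d, w ^ (d - 1 - m) * w := by
        refine Finset.sum_congr rfl fun m hm => ?_
        have hmd := Finset.mem_range.mp hm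
        rw [← pow_succ]
        congr 1
        omega
    _ = (∑ m ∈ range d, w ^ m) * w := by
        rw [← Finset.sum_mul, Finset.sum_range_reflect (fun m => w ^ m) d]
    _ = ∑ m ∈ range d, w ^ m := yh_geom_shift w d hwd

lemma yh_semiconj_sum {ι : Type*} {a : A} {s : Finset ι} {x y : ι → A}
    (h : ∀ m ∈ s, SemiconjBy a (x m) (y m)) :
    SemiconjBy a (∑ m ∈ s, x m) (∑ m ∈ s, y m) := by
  unfold SemiconjBy
  rw [Finset.mul_sum, Finset.sum_mul]
  exact Finset.sum_congr rfl fun m hm => h m hm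

lemma yh_semiconj_smul [Algebra ℂ A] {a x y : A} (c : ℂ) (h : SemiconjBy a x y) :
    SemiconjBy a (c • x) (c • y) := by
  unfold SemiconjBy at *
  rw [mul_smul_comm, smul_mul_assoc, h]

lemma yh_inv_aux [Algebra ℂ A] (u : ℂ) (hu0 : u ≠ 0) (E G : A)
    (hEE : E * E = E) (hEG : G * E = E * G)
    (hq : G * G = 1 + (u-1) • E - (u-1) • (E * G)) :
    G * (G + (1 - u⁻¹) • (E * (1 - G))) = 1 ∧
      (G + (1 - u⁻¹) • (E * (1 - G))) * G = 1 := by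
  have h1 : E * (G * G) = E + (u-1) • E - (u-1) • (E * G) := by
    rw [hq, mul_sub, mul_add, mul_one, mul_smul_comm, mul_smul_comm, hEE, ← mul_assoc, hEE]
  have key : G * G + (1 - u⁻¹) • (E * G - E * (G * G)) = 1 := by
    rw [h1, hq]
    match_scalars <;> field_simp <;> ring
  constructor
  · have h2 : G * (E * (1 - G)) = E * G - E * (G * G) := by
      rw [← mul_assoc, hEG, mul_sub, mul_one, mul_assoc]
    rw [mul_add, mul_smul_comm, h2, key]
  · have h3 : (E * (1 - G)) * G = E * G - E * (G * G) := by
      rw [mul_assoc, sub_mul, one_mul, mul_sub]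
    rw [add_mul, smul_mul_assoc, h3, key]

end YHHelpers

/-- image of the generators under the homomorphism `δ_a`. -/
noncomputable def yhGen {A : Type*} [Ring A] [Algebra ℂ A] (d : ℕ) (u a : ℂ) (g t : ℕ → A) :
    SBGen → A
  | SBGen.sig i => a • g i
  | SBGen.sigInv i => a⁻¹ • (g i + (1 - u⁻¹) • (eElt d t i * (1 - g i)))
  | SBGen.tau i => pElt d t g i

theorem yh_delta_hom {A : Type*} [Ring A] [Algebra ℂ A] (d n : ℕ) (u : ℂ) (a : ℂ) (ha : a ≠ 0)
    (hd : 0 < d) (hu0 : u ≠ 0) (hu1 : u ≠ 1) (g t : ℕ → A)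
    (hgcomm : ∀ i j, 1 ≤ i → i ≤ n - 1 → 1 ≤ j → j ≤ n - 1 → (i + 1 < j ∨ j + 1 < i) →
      g i * g j = g j * g i)
    (hbraid : ∀ i j, 1 ≤ i → i ≤ n - 1 → 1 ≤ j → j ≤ n - 1 → (j = i + 1 ∨ i = j + 1) →
      g i * g j * g i = g j * g i * g j)
    (htt : ∀ i j, 1 ≤ i → i ≤ n → 1 ≤ j → j ≤ n → t i * t j = t j * t i)
    (htg : ∀ i j, 1 ≤ i → i ≤ n - 1 → 1 ≤ j → j ≤ n →
      t j * g i = g i * t (Equiv.swap i (i + 1) j))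
    (htd : ∀ j, 1 ≤ j → j ≤ n → t j ^ d = 1)
    (hquad : ∀ i, 1 ≤ i → i ≤ n - 1 →
      g i ^ 2 = 1 + (u - 1) • eElt d t i - (u - 1) • (eElt d t i * g i)) :
    ∃ δ : SBMonoid n →* A,
      ∀ i, 1 ≤ i → i ≤ n - 1 →
        δ ((conGen (sbRel n)).mk' (FreeMonoid.of (SBGen.sig i))) = a • g i ∧
        δ ((conGen (sbRel n)).mk' (FreeMonoid.of (SBGen.tau i))) = pElt d t g i := by
  classical
  have hdC : (d : ℂ) ≠ 0 := Nat.cast_ne_zero.mpr hd.ne'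
  -- semiconjugation of t across g
  have hsc : ∀ i k, 1 ≤ i → i ≤ n - 1 → 1 ≤ k → k ≤ n →
      SemiconjBy (g i) (t k) (t (Equiv.swap i (i+1) k)) := by
    intro i k hi1 hi2 hk1 hk2
    have hb : 1 ≤ Equiv.swap i (i+1) k ∧ Equiv.swap i (i+1) k ≤ n := by
      rcases eq_or_ne k i with rfl | h1
      · rw [Equiv.swap_apply_left]; omega
      rcases eq_or_ne k (i+1) with rfl | h2
      · rw [Equiv.swap_apply_right]; omega
      · rw [Equiv.swap_apply_of_ne_of_ne h1 h2]; omega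
    have h := htg i (Equiv.swap i (i+1) k) hi1 hi2 hb.1 hb.2
    rw [Equiv.swap_apply_self] at h
    exact h.symm
  have hsc_far : ∀ i k, 1 ≤ i → i ≤ n - 1 → 1 ≤ k → k ≤ n → k ≠ i → k ≠ i + 1 →
      SemiconjBy (g i) (t k) (t k) := by
    intro i k hi1 hi2 hk1 hk2 h1 h2
    have h := hsc i k hi1 hi2 hk1 hk2
    rwa [Equiv.swap_apply_of_ne_of_ne h1 h2] at h
  have hEdef : ∀ i, eElt d t i =
      (d:ℂ)⁻¹ • ∑ m ∈ Finset.range d, t i ^ m * t (i+1) ^ (d - m) := fun i => rfl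
  -- g i commutes with e i
  have hcomm_gE : ∀ i, 1 ≤ i → i ≤ n - 1 → Commute (g i) (eElt d t i) := by
    intro i hi1 hi2
    have h1 : SemiconjBy (g i) (∑ m ∈ Finset.range d, t i ^ m * t (i+1) ^ (d - m))
        (∑ m ∈ Finset.range d, t (i+1) ^ m * t i ^ (d - m)) := by
      refine yh_semiconj_sum fun m hm => ?_
      have a1 := (hsc i i hi1 hi2 hi1 (by omega)).pow_right m
      rw [Equiv.swap_apply_left] at a1
      have a2 := (hsc i (i+1) hi1 hi2 (by omega) (by omega)).pow_right (d-m)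
      rw [Equiv.swap_apply_right] at a2
      exact a1.mul_right a2
    rw [yh_S_symm (t i) (t (i+1)) d (htt i (i+1) hi1 (by omega) (by omega) (by omega))
      (htd i hi1 (by omega)) (htd (i+1) (by omega) (by omega))] at h1
    rw [Commute, hEdef]
    exact yh_semiconj_smul _ h1
  -- e i is idempotent
  have hEsq : ∀ i, 1 ≤ i → i ≤ n - 1 → eElt d t i * eElt d t i = eElt d t i := by
    intro i hi1 hi2
    rw [hEdef, smul_mul_assoc, mul_smul_comm,
      yh_S_sq (t i) (t (i+1)) d (htt i (i+1) hi1 (by omega) (by omega) (by omega))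
        (htd i hi1 (by omega)) (htd (i+1) (by omega) (by omega)),
      ← Nat.cast_smul_eq_nsmul ℂ, smul_smul, smul_smul]
    congr 1
    field_simp
  -- g i commutes with e j for far i j
  have hscE_far : ∀ i j, 1 ≤ i → i ≤ n-1 → 1 ≤ j → j ≤ n-1 → (i+1 < j ∨ j+1 < i) →
      Commute (g i) (eElt d t j) := by
    intro i j hi1 hi2 hj1 hj2 hfar
    rw [Commute, hEdef]
    refine yh_semiconj_smul _ (yh_semiconj_sum fun m hm => ?_)
    exact ((hsc_far i j hi1 hi2 hj1 (by omega) (by omega) (by omega)).pow_right m).mul_right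
      ((hsc_far i (j+1) hi1 hi2 (by omega) (by omega) (by omega) (by omega)).pow_right (d-m))
  -- commuting e's
  have hcomm_EE : ∀ i j, 1 ≤ i → i ≤ n-1 → 1 ≤ j → j ≤ n-1 →
      Commute (eElt d t i) (eElt d t j) := by
    intro i j hi1 hi2 hj1 hj2
    have hT : ∀ p q, 1 ≤ p → p ≤ n → 1 ≤ q → q ≤ n → Commute (t p) (t q) :=
      fun p q a b c e => htt p q a b c e
    rw [hEdef i, hEdef j]
    have hSS : Commute (∑ m ∈ Finset.range d, t i ^ m * t (i+1) ^ (d - m))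
        (∑ m ∈ Finset.range d, t j ^ m * t (j+1) ^ (d - m)) := by
      refine Commute.sum_left _ _ _ fun m _ => Commute.sum_right _ _ _ fun k _ => ?_
      exact (((hT i j hi1 (by omega) hj1 (by omega)).pow_pow m k).mul_right
          ((hT i (j+1) hi1 (by omega) (by omega) (by omega)).pow_pow m (d-k))).mul_left
        (((hT (i+1) j (by omega) (by omega) hj1 (by omega)).pow_pow (d-m) k).mul_right
          ((hT (i+1) (j+1) (by omega) (by omega) (by omega) (by omega)).pow_pow (d-m) (d-k)))
    exact yh_semiconj_smul _ (yh_semiconj_smul _ hSS).symm |>.symm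
  -- adjacent semiconjugation of e
  have hscE_adj : ∀ i j, 1 ≤ i → i ≤ n-1 → 1 ≤ j → j ≤ n-1 → (j = i+1 ∨ i = j+1) →
      SemiconjBy (g i * g j) (eElt d t i) (eElt d t j) := by
    intro i j hi1 hi2 hj1 hj2 hadj
    have k1 : SemiconjBy (g i * g j) (t i) (t j) := by
      rcases hadj with rfl | rfl
      · have b1 := hsc (i+1) i hj1 hj2 hi1 (by omega)
        rw [Equiv.swap_apply_of_ne_of_ne (by omega) (by omega)] at b1
        have b2 := hsc i i hi1 hi2 hi1 (by omega)
        rw [Equiv.swap_apply_left] at b2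
        exact b2.mul_left b1
      · have b1 := hsc j (j+1) hj1 hj2 (by omega) (by omega)
        rw [Equiv.swap_apply_right] at b1
        have b2 := hsc (j+1) j hi1 hi2 hj1 (by omega)
        rw [Equiv.swap_apply_of_ne_of_ne (by omega) (by omega)] at b2
        exact b2.mul_left b1
    have k2 : SemiconjBy (g i * g j) (t (i+1)) (t (j+1)) := by
      rcases hadj with rfl | rfl
      · have b1 := hsc (i+1) (i+1) hj1 hj2 (by omega) (by omega)
        rw [Equiv.swap_apply_left] at b1
        have b2 := hsc i (i+2) hi1 hi2 (by omega) (by omega)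
        rw [Equiv.swap_apply_of_ne_of_ne (by omega) (by omega)] at b2
        exact b2.mul_left b1
      · have b1 := hsc j (j+2) hj1 hj2 (by omega) (by omega)
        rw [Equiv.swap_apply_of_ne_of_ne (by omega) (by omega)] at b1
        have b2 := hsc (j+1) (j+2) hi1 hi2 (by omega) (by omega)
        rw [Equiv.swap_apply_right] at b2
        exact b2.mul_left b1
    rw [hEdef i, hEdef j]
    exact yh_semiconj_smul _ (yh_semiconj_sum fun m _ =>
      (k1.pow_right m).mul_right (k2.pow_right (d-m)))
  -- inverse elements
  have hInv : ∀ i, 1 ≤ i → i ≤ n - 1 →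
      g i * (g i + (1 - u⁻¹) • (eElt d t i * (1 - g i))) = 1 ∧
      (g i + (1 - u⁻¹) • (eElt d t i * (1 - g i))) * g i = 1 := by
    intro i hi1 hi2
    refine yh_inv_aux u hu0 (eElt d t i) (g i) (hEsq i hi1 hi2) (hcomm_gE i hi1 hi2).eq ?_
    have h := hquad i hi1 hi2
    rwa [pow_two] at h
  -- the homomorphism
  have hker : conGen (sbRel n) ≤ Con.ker (FreeMonoid.lift (yhGen d u a g t)) := by
    refine Con.conGen_le.mpr ?_
    intro x y hxy
    rw [Con.ker_rel]
    cases hxy with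
    | invR i h1 h2 =>
      simp only [map_mul, map_one, FreeMonoid.lift_eval_of, yhGen]
      rw [smul_mul_assoc, mul_smul_comm, smul_smul, mul_inv_cancel₀ ha, one_smul]
      exact (hInv i h1 h2).1
    | invL i h1 h2 =>
      simp only [map_mul, map_one, FreeMonoid.lift_eval_of, yhGen]
      rw [smul_mul_assoc, mul_smul_comm, smul_smul, inv_mul_cancel₀ ha, one_smul]
      exact (hInv i h1 h2).2
    | commSS i j h1 h2 h3 h4 hfar =>
      simp only [map_mul, FreeMonoid.lift_eval_of, yhGen, smul_mul_assoc, mul_smul_comm]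
      rw [hgcomm i j h1 h2 h3 h4 hfar]
    | commST i j h1 h2 h3 h4 hfar =>
      simp only [map_mul, FreeMonoid.lift_eval_of, yhGen, smul_mul_assoc, mul_smul_comm]
      congr 1
      have c1 : Commute (g i) (eElt d t j) := hscE_far i j h1 h2 h3 h4 hfar
      have c2 : Commute (g i) (1 - g j) :=
        (Commute.one_right (g i)).sub_right (hgcomm i j h1 h2 h3 h4 hfar)
      exact (c1.mul_right c2).eq
    | commTT i j h1 h2 h3 h4 hfar =>
      simp only [map_mul, FreeMonoid.lift_eval_of, yhGen]
      have cEE : Commute (eElt d t i) (eElt d t j) := hcomm_EE i j h1 h2 h3 h4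
      have cgE : Commute (g i) (eElt d t j) := hscE_far i j h1 h2 h3 h4 hfar
      have cEg : Commute (eElt d t i) (g j) :=
        (hscE_far j i h3 h4 h1 h2 hfar.symm).symm
      have cgg : Commute (g i) (g j) := hgcomm i j h1 h2 h3 h4 hfar
      have c1 : Commute (eElt d t i) (eElt d t j * (1 - g j)) :=
        cEE.mul_right ((Commute.one_right _).sub_right cEg)
      have c2 : Commute (1 - g i) (eElt d t j * (1 - g j)) :=
        ((Commute.one_left _).sub_left cgE).mul_right
          (((Commute.one_left _).sub_left ((Commute.one_right _).sub_right cgg)))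
      exact (c1.mul_left c2).eq
    | commSTi i h1 h2 =>
      simp only [map_mul, FreeMonoid.lift_eval_of, yhGen, smul_mul_assoc, mul_smul_comm]
      congr 1
      exact ((hcomm_gE i h1 h2).mul_right
        ((Commute.one_right _).sub_right (Commute.refl _))).eq
    | braid i j h1 h2 h3 h4 hadj =>
      simp only [map_mul, FreeMonoid.lift_eval_of, yhGen, smul_mul_assoc, mul_smul_comm]
      rw [hbraid i j h1 h2 h3 h4 hadj]
    | braidT i j h1 h2 h3 h4 hadj =>
      simp only [map_mul, FreeMonoid.lift_eval_of, yhGen, smul_mul_assoc, mul_smul_comm]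
      have hgsemi : SemiconjBy (g i * g j) (g i) (g j) := by
        rw [SemiconjBy, ← mul_assoc]
        exact hbraid i j h1 h2 h3 h4 hadj
      have hP : SemiconjBy (g i * g j) (pElt d t g i) (pElt d t g j) :=
        (hscE_adj i j h1 h2 h3 h4 hadj).mul_right
          ((SemiconjBy.one_right _).sub_right hgsemi)
      rw [mul_assoc (g i) (g j), ← mul_assoc (g i) (g j), hP.eq, mul_assoc]
  refine ⟨(conGen (sbRel n)).lift (FreeMonoid.lift (yhGen d u a g t)) hker,
    fun i hi1 hi2 => ⟨?_, ?_⟩⟩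
  · exact Con.lift_mk' hker (FreeMonoid.of (SBGen.sig i))
  · exact Con.lift_mk' hker (FreeMonoid.of (SBGen.tau i))
end

section
/- The numbers x_i := -(-1)^{i(d-1)}/(d-1), for 1 ≤ i ≤ d-1 (with d ≥ 2), satisfy the E-system sum_{s=0}^{d-1} x_{m+s} x_{d-s} = x_m · sum_{s=0}^{d-1} x_s x_{d-s} (indices mod d, x_0 = x_d = 1), and for this solution ζ := (1/d) sum_{s=0}^{d-1} x_s x_{d-s} = 1/(d-1). -/
open Finset

/-- The solution `x_i = -(-1)^(i(d-1))/(d-1)` of the E-system, extended to all of `ℕ`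
periodically mod `d` with the convention `x_0 = x_d = 1`. -/
noncomputable def eSol (d : ℕ) (i : ℕ) : ℂ :=
  if i % d = 0 then 1 else -(-1 : ℂ) ^ ((i % d) * (d - 1)) / ((d : ℂ) - 1)

lemma omega_pow_d (d : ℕ) (hd : 1 ≤ d) : ((-1:ℂ)^(d-1))^d = 1 := by
  rw [← pow_mul]
  apply Even.neg_one_pow
  have h : d - 1 + 1 = d := Nat.succ_pred_eq_of_pos hd
  have := Nat.even_mul_succ_self (d-1)
  rwa [h] at this

lemma omega_mod (d i : ℕ) (hd : 1 ≤ d) :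
    ((-1:ℂ)^(d-1))^(i % d) = ((-1:ℂ)^(d-1))^i := by
  conv_rhs => rw [← Nat.div_add_mod i d]
  rw [pow_add, pow_mul, omega_pow_d d hd, one_pow, one_mul]

lemma eSol_eq (d i : ℕ) (hd : 1 ≤ d) (h : i % d ≠ 0) :
    eSol d i = -((-1:ℂ)^(d-1))^i / ((d:ℂ)-1) := by
  unfold eSol
  rw [if_neg h]
  congr 1
  rw [mul_comm, pow_mul, ← omega_mod d i hd]

lemma eSol_zero_mod (d i : ℕ) (h : i % d = 0) : eSol d i = 1 := by
  simp [eSol, h]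

lemma hd1ne (d : ℕ) (hd : 2 ≤ d) : ((d:ℂ)-1) ≠ 0 := by
  have h1 : (d:ℂ) ≠ 1 := by exact_mod_cast (by omega : d ≠ 1)
  intro h
  exact h1 (sub_eq_zero.mp h)

lemma sum_S (d : ℕ) (hd : 2 ≤ d) :
    ∑ s ∈ Finset.range d, eSol d s * eSol d (d - s) = (d:ℂ)/((d:ℂ)-1) := by
  have hd1 := hd1ne d hd
  set c : ℂ := 1/((d:ℂ)-1)^2 with hc
  have key : ∀ s ∈ Finset.range d, eSol d s * eSol d (d-s)
      = c + (if s = 0 then 1 - c else 0) := by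
    intro s hs
    rw [Finset.mem_range] at hs
    by_cases h0 : s = 0
    · subst h0
      rw [eSol_zero_mod d 0 (by simp), eSol_zero_mod d (d-0) (by simp)]
      simp
    · rw [if_neg h0]
      rw [eSol_eq d s (by omega) (by rw [Nat.mod_eq_of_lt hs]; exact h0),
          eSol_eq d (d-s) (by omega) (by rw [Nat.mod_eq_of_lt (by omega)]; omega)]
      have hp : ((-1:ℂ)^(d-1))^s * ((-1:ℂ)^(d-1))^(d-s) = 1 := by
        rw [← pow_add, (by omega : s + (d-s) = d), omega_pow_d d (by omega)]
      rw [div_mul_div_comm, neg_mul_neg, hp, hc]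
      ring
  rw [Finset.sum_congr rfl key, Finset.sum_add_distrib, Finset.sum_const,
      Finset.sum_ite_eq' (Finset.range d) 0 (fun _ => 1 - c)]
  rw [if_pos (by simp; omega), Finset.card_range, hc]
  have hdne : (d:ℂ) ≠ 0 := by exact_mod_cast (by omega : d ≠ 0)
  rw [nsmul_eq_mul]
  field_simp
  ring

theorem esystem_special_solution (d : ℕ) (hd : 2 ≤ d) :
    (∀ m, 1 ≤ m → m ≤ d - 1 →
      ∑ s ∈ Finset.range d, eSol d (m + s) * eSol d (d - s) =
        eSol d m * ∑ s ∈ Finset.range d, eSol d s * eSol d (d - s)) ∧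
    (d : ℂ)⁻¹ * ∑ s ∈ Finset.range d, eSol d s * eSol d (d - s) = 1 / ((d : ℂ) - 1) := by
  have hd1 := hd1ne d hd
  have hdne : (d:ℂ) ≠ 0 := by exact_mod_cast (by omega : d ≠ 0)
  constructor
  · intro m hm1 hm2
    set ω : ℂ := (-1:ℂ)^(d-1) with hω
    set C : ℂ := ω^m/((d:ℂ)-1)^2 with hC
    set A : ℂ := -ω^m/((d:ℂ)-1) - C with hA
    have hxm : eSol d m = -ω^m/((d:ℂ)-1) :=
      eSol_eq d m (by omega) (by rw [Nat.mod_eq_of_lt (by omega)]; omega)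
    have key : ∀ s ∈ Finset.range d, eSol d (m+s) * eSol d (d-s)
        = C + ((if s = 0 then A else 0) + (if s = d - m then A else 0)) := by
      intro s hs
      rw [Finset.mem_range] at hs
      by_cases h0 : s = 0
      · subst h0
        rw [eSol_zero_mod d (d-0) (by simp), if_pos rfl, if_neg (by omega)]
        rw [mul_one, Nat.add_zero, hxm, hA]
        ring
      · by_cases hdm : s = d - m
        · subst hdm
          rw [eSol_zero_mod d (m + (d-m)) (by rw [(by omega : m + (d-m) = d)]; simp),
              if_neg h0, if_pos rfl, one_mul,
              (by omega : d - (d - m) = m), hxm, hA]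
          ring
        · rw [if_neg h0, if_neg hdm, add_zero, add_zero]
          have hms : (m + s) % d ≠ 0 := by
            rcases lt_or_ge (m+s) d with h | h
            · rw [Nat.mod_eq_of_lt h]; omega
            · rw [Nat.mod_eq_sub_mod h, Nat.mod_eq_of_lt (by omega)]; omega
          rw [eSol_eq d (m+s) (by omega) hms,
              eSol_eq d (d-s) (by omega) (by rw [Nat.mod_eq_of_lt (by omega)]; omega)]
          have hp : ω^(m+s) * ω^(d-s) = ω^m := by
            rw [← pow_add, (by omega : (m+s) + (d-s) = m + d), pow_add,
                hω, omega_pow_d d (by omega), mul_one]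
          rw [div_mul_div_comm, neg_mul_neg, hp, hC]
          ring
    rw [Finset.sum_congr rfl key, Finset.sum_add_distrib, Finset.sum_const,
        Finset.sum_add_distrib,
        Finset.sum_ite_eq' (Finset.range d) 0 (fun _ => A),
        Finset.sum_ite_eq' (Finset.range d) (d-m) (fun _ => A),
        if_pos (by simp; omega), if_pos (by simp; omega),
        Finset.card_range, sum_S d hd, hxm, hA, hC]
    rw [nsmul_eq_mul]
    field_simp
    ring
  · rw [sum_S d hd]
    field_simp
end

section
/- In the Yokonuma–Hecke algebra Y_{d,n}(u), for every positive integer k: g_i^{-2k} = 1 + u^{-1}(u^{-1}-1)(sum_{l=0}^{k-1} u^{-2l}) p_i and g_i^{-2k+1} = g_i - (u^{-1}-1)(sum_{l=0}^{k-1} u^{-2l}) p_i, where p_i := e_i(1 - g_i). -/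
open Finset

private lemma zmul_aux {A : Type*} [Ring A] (x y : A) (d a b : ℕ) (hxy : Commute x y)
    (hx : x ^ d = 1) (hy : y ^ d = 1) (ha : a < d) (hb : b < d) :
    (x ^ a * y ^ (d - a)) * (x ^ b * y ^ (d - b)) = x ^ ((a + b) % d) * y ^ (d - (a + b) % d) := by
  have hc : y ^ (d - a) * x ^ b = x ^ b * y ^ (d - a) := (hxy.symm.pow_pow _ _)
  rw [mul_assoc, ← mul_assoc (y ^ (d - a)), hc, mul_assoc, ← mul_assoc, ← pow_add, ← pow_add]
  by_cases hab : a + b < d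
  · rw [Nat.mod_eq_of_lt hab]
    have h1 : (d - a) + (d - b) = (d - (a + b)) + d := by omega
    rw [h1, pow_add y (d - (a + b)) d, hy, mul_one]
  · have hmod : (a + b) % d = a + b - d := by
      rw [Nat.mod_eq_sub_mod (by omega), Nat.mod_eq_of_lt (by omega)]
    have h1 : x ^ (a + b) = x ^ (a + b - d) := by
      conv_lhs => rw [show a + b = d + (a + b - d) by omega]
      rw [pow_add, hx, one_mul]
    have h2 : (d - a) + (d - b) = d - (a + b - d) := by omega
    rw [hmod, h1, h2]

theorem yh_g_negative_powers {A : Type*} [Ring A] [Algebra ℂ A] (d n : ℕ) (u : ℂ)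
    (hd : 0 < d) (hu0 : u ≠ 0) (hu1 : u ≠ 1) (g t : ℕ → A)
    (hgcomm : ∀ i j, 1 ≤ i → i ≤ n - 1 → 1 ≤ j → j ≤ n - 1 → (i + 1 < j ∨ j + 1 < i) →
      g i * g j = g j * g i)
    (hbraid : ∀ i j, 1 ≤ i → i ≤ n - 1 → 1 ≤ j → j ≤ n - 1 → (j = i + 1 ∨ i = j + 1) →
      g i * g j * g i = g j * g i * g j)
    (htt : ∀ i j, 1 ≤ i → i ≤ n → 1 ≤ j → j ≤ n → t i * t j = t j * t i)
    (htg : ∀ i j, 1 ≤ i → i ≤ n - 1 → 1 ≤ j → j ≤ n →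
      t j * g i = g i * t (Equiv.swap i (i + 1) j))
    (htd : ∀ j, 1 ≤ j → j ≤ n → t j ^ d = 1)
    (hquad : ∀ i, 1 ≤ i → i ≤ n - 1 →
      g i ^ 2 = 1 + (u - 1) • eElt d t i - (u - 1) • (eElt d t i * g i)) :
    ∀ i, 1 ≤ i → i ≤ n - 1 → ∀ h : A, g i * h = 1 → h * g i = 1 → ∀ k : ℕ, 1 ≤ k →
      h ^ (2 * k) = 1 + (u⁻¹ * (u⁻¹ - 1) * ∑ l ∈ Finset.range k, (u⁻¹) ^ (2 * l)) • pElt d t g i ∧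
      h ^ (2 * k - 1) = g i - ((u⁻¹ - 1) * ∑ l ∈ Finset.range k, (u⁻¹) ^ (2 * l)) • pElt d t g i := by
  intro i hi1 hi2 h hgh hhg k hk
  have hin : i + 1 ≤ n := by omega
  have hin1 : 1 ≤ i + 1 := by omega
  have hiN : i ≤ n := by omega
  have hcomm : Commute (t i) (t (i + 1)) := htt i (i + 1) hi1 hiN hin1 hin
  have hti : t i ^ d = 1 := htd i hi1 hiN
  have hti1 : t (i + 1) ^ d = 1 := htd (i + 1) hin1 hin
  set z : ℕ → A := fun a => t i ^ a * t (i + 1) ^ (d - a) with hzdef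
  -- multiplication rule for the z's
  have hzz : ∀ a b, a < d → b < d → z a * z b = z ((a + b) % d) := fun a b ha hb =>
    zmul_aux (t i) (t (i + 1)) d a b hcomm hti hti1 ha hb
  set S : A := ∑ b ∈ Finset.range d, z b with hSdef
  have hrot : ∀ a, a < d → ∑ b ∈ Finset.range d, z ((a + b) % d) = S := by
    intro a ha
    refine Finset.sum_nbij' (i := fun b => (a + b) % d) (j := fun b => (b + (d - a)) % d)
      ?_ ?_ ?_ ?_ ?_
    · intro b hb
      exact Finset.mem_range.2 (Nat.mod_lt _ hd)
    · intro b hb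
      exact Finset.mem_range.2 (Nat.mod_lt _ hd)
    · intro b hb
      rw [Finset.mem_range] at hb
      show ((a + b) % d + (d - a)) % d = b
      rw [Nat.mod_add_mod, show a + b + (d - a) = b + d by omega, Nat.add_mod_right,
        Nat.mod_eq_of_lt hb]
    · intro b hb
      rw [Finset.mem_range] at hb
      show (a + (b + (d - a)) % d) % d = b
      rw [Nat.add_mod_mod, show a + (b + (d - a)) = b + d by omega, Nat.add_mod_right,
        Nat.mod_eq_of_lt hb]
    · intro b hb
      rfl
  have hS2 : S * S = (d : ℂ) • S := by
    rw [hSdef, Finset.sum_mul_sum]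
    calc (∑ a ∈ Finset.range d, ∑ b ∈ Finset.range d, z a * z b)
        = ∑ a ∈ Finset.range d, ∑ b ∈ Finset.range d, z ((a + b) % d) := by
          refine Finset.sum_congr rfl fun a ha => Finset.sum_congr rfl fun b hb => ?_
          exact hzz a b (Finset.mem_range.1 ha) (Finset.mem_range.1 hb)
      _ = ∑ a ∈ Finset.range d, S := by
          refine Finset.sum_congr rfl fun a ha => hrot a (Finset.mem_range.1 ha)
      _ = (d : ℂ) • S := by
          rw [Finset.sum_const, Finset.card_range, ← Nat.cast_smul_eq_nsmul ℂ]
  have heS : eElt d t i = (d : ℂ)⁻¹ • S := rfl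
  have hdC : (d : ℂ) ≠ 0 := Nat.cast_ne_zero.2 hd.ne'
  have hee : eElt d t i * eElt d t i = eElt d t i := by
    rw [heS, smul_mul_smul_comm, hS2, smul_smul]
    congr 1
    field_simp
  set E : A := eElt d t i with hEdef
  set G : A := g i with hGdef
  set P : A := pElt d t g i with hPdef0
  have hP : P = E * (1 - G) := rfl
  have hP' : P = E - E * G := by rw [hP, mul_one_sub]
  have hq : G ^ 2 = 1 + (u - 1) • P := by
    rw [hquad i hi1 hi2, hP', smul_sub]
    abel
  have hEP : E * P = P := by
    rw [hP, ← mul_assoc, hee]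
  have hPG : P * G = -(u • P) := by
    have h1 : P * G = E * G - E * (G * G) := by
      rw [hP, mul_assoc, one_sub_mul, mul_sub]
    rw [h1, ← pow_two, hq, mul_add, mul_one, mul_smul_comm, hEP, hP']
    module
  have hPh : P * h = -(u⁻¹ • P) := by
    have h1 : P = -(u • (P * h)) := by
      calc P = P * (G * h) := by rw [hgh, mul_one]
        _ = (P * G) * h := by rw [mul_assoc]
        _ = -(u • (P * h)) := by rw [hPG, neg_mul, smul_mul_assoc]
    have h2 := congrArg (fun x => u⁻¹ • x) h1
    simp only [smul_neg, smul_smul, inv_mul_cancel₀ hu0, one_smul] at h2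
    rw [eq_comm, neg_eq_iff_eq_neg] at h2
    rw [h2]
  have hPh2 : P * h ^ 2 = (u⁻¹ * u⁻¹) • P := by
    rw [pow_two, ← mul_assoc, hPh, neg_mul, smul_mul_assoc, hPh, smul_neg, neg_neg, smul_smul]
  have hGh2 : G ^ 2 * h ^ 2 = 1 := by
    rw [pow_two, pow_two, mul_assoc, ← mul_assoc G h h, hgh, one_mul, hgh]
  have hh2 : h ^ 2 = 1 - ((u - 1) * (u⁻¹ * u⁻¹)) • P := by
    have h2 : (1 : A) = h ^ 2 + ((u - 1) * (u⁻¹ * u⁻¹)) • P := by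
      calc (1 : A) = G ^ 2 * h ^ 2 := hGh2.symm
        _ = (1 + (u - 1) • P) * h ^ 2 := by rw [hq]
        _ = h ^ 2 + (u - 1) • (P * h ^ 2) := by rw [add_mul, one_mul, smul_mul_assoc]
        _ = h ^ 2 + ((u - 1) * (u⁻¹ * u⁻¹)) • P := by rw [hPh2, smul_smul]
    exact eq_sub_of_add_eq h2.symm
  have heven : ∀ m : ℕ,
      h ^ (2 * (m + 1)) =
        1 + (u⁻¹ * (u⁻¹ - 1) * ∑ l ∈ Finset.range (m + 1), (u⁻¹) ^ (2 * l)) • P := by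
    intro m
    induction m with
    | zero =>
      have hc : u⁻¹ * (u⁻¹ - 1) * ∑ l ∈ Finset.range 1, (u⁻¹) ^ (2 * l)
          = -((u - 1) * (u⁻¹ * u⁻¹)) := by
        simp only [Finset.sum_range_one, pow_zero, mul_one]
        field_simp
        ring
      rw [show 2 * (0 + 1) = 2 by ring, hh2, hc, neg_smul, ← sub_eq_add_neg]
    | succ m ih =>
      have hstep : h ^ (2 * (m + 1 + 1)) = h ^ (2 * (m + 1)) * h ^ 2 := by
        rw [← pow_add]; ring_nf
      have hc : u⁻¹ * (u⁻¹ - 1) * ∑ l ∈ Finset.range (m + 1 + 1), (u⁻¹) ^ (2 * l)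
          = (u⁻¹ * (u⁻¹ - 1) * ∑ l ∈ Finset.range (m + 1), (u⁻¹) ^ (2 * l)) * (u⁻¹ * u⁻¹)
            - (u - 1) * (u⁻¹ * u⁻¹) := by
        rw [Finset.sum_range_succ', pow_zero]
        have : ∀ l, (u⁻¹ : ℂ) ^ (2 * (l + 1)) = (u⁻¹ * u⁻¹) * (u⁻¹) ^ (2 * l) := by
          intro l; rw [show 2 * (l + 1) = 2 * l + 2 by ring, pow_add]; ring
        rw [Finset.sum_congr rfl fun l _ => this l, ← Finset.mul_sum]
        field_simp
        ring
      rw [hstep, ih, add_mul, one_mul, smul_mul_assoc, hPh2, smul_smul, hh2, hc]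
      module
  obtain ⟨m, rfl⟩ : ∃ m, k = m + 1 := ⟨k - 1, by omega⟩
  refine ⟨heven m, ?_⟩
  have hodd1 : h ^ (2 * (m + 1) - 1) = h ^ (2 * (m + 1)) * G := by
    have : h ^ (2 * (m + 1)) = h ^ (2 * (m + 1) - 1) * h := by
      rw [← pow_succ]; congr 1 <;> omega
    rw [this, mul_assoc, hhg, mul_one]
  have hc : (u⁻¹ * (u⁻¹ - 1) * ∑ l ∈ Finset.range (m + 1), (u⁻¹) ^ (2 * l)) * u
      = (u⁻¹ - 1) * ∑ l ∈ Finset.range (m + 1), (u⁻¹) ^ (2 * l) := by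
    field_simp
  rw [hodd1, heven m, add_mul, one_mul, smul_mul_assoc, hPG, smul_neg, smul_smul, hc,
    ← sub_eq_add_neg]
end
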